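/- Let κ_{c,t} = −cos(Y_{c₅}(ℓ+t)) be the geodesic curvature of the constant-distance curve β_{c,t} in the collar around a geodesic of length ℓ+t, where Y_{c₅}(ℓ) = 2 arctan(e^{c₅} tan(½ arctan sinh(ℓ/2))). Then |d/dt κ_{c,t}|_{t=0}| = sin(Y_{c₅}(ℓ)) · |Y_{c₅}′(ℓ)| ≤ C ℓ for all ℓ ∈ (0, L̄], with C depending only on c₅ and L̄. -/

import Mathlib

open Real

/-- `Y_c(ℓ) = 2 arctan(e^c tan(½ arctan(sinh(ℓ/2))))`. -/
noncomputable def Ycurve (c ℓ : ℝ) : ℝ :=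
  2 * Real.arctan (Real.exp c * Real.tan (Real.arctan (Real.sinh (ℓ / 2)) / 2))

/-- Explicit derivative of `Ycurve c`. -/
noncomputable def Yd (c ℓ : ℝ) : ℝ :=
  2 * (1 / (1 + (Real.exp c * Real.tan (Real.arctan (Real.sinh (ℓ / 2)) / 2)) ^ 2) *
    (Real.exp c * (1 / Real.cos (Real.arctan (Real.sinh (ℓ / 2)) / 2) ^ 2 *
      (1 / (1 + Real.sinh (ℓ / 2) ^ 2) * (Real.cosh (ℓ / 2) * (1 / 2)) / 2))))

lemma cos_half_arctan_pos (x : ℝ) : 0 < Real.cos (Real.arctan x / 2) := by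
  apply Real.cos_pos_of_mem_Ioo
  have h1 := Real.neg_pi_div_two_lt_arctan x
  have h2 := Real.arctan_lt_pi_div_two x
  have h3 := Real.pi_pos
  exact Set.mem_Ioo.mpr ⟨by linarith, by linarith⟩

lemma ycurve_hasDerivAt (c ℓ : ℝ) : HasDerivAt (Ycurve c) (Yd c ℓ) ℓ := by
  have h1 : HasDerivAt (fun l : ℝ => l / 2) (1 / 2) ℓ := by
    simpa using (hasDerivAt_id ℓ).div_const 2
  have h2 : HasDerivAt (fun l : ℝ => Real.sinh (l / 2))
      (Real.cosh (ℓ / 2) * (1 / 2)) ℓ :=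
    by have := (Real.hasDerivAt_sinh (ℓ / 2)).comp ℓ h1; exact this
  have h3 : HasDerivAt (fun l : ℝ => Real.arctan (Real.sinh (l / 2)))
      (1 / (1 + Real.sinh (ℓ / 2) ^ 2) * (Real.cosh (ℓ / 2) * (1 / 2))) ℓ :=
    (Real.hasDerivAt_arctan _).comp ℓ h2
  have h4 := h3.div_const 2
  have hcos : Real.cos (Real.arctan (Real.sinh (ℓ / 2)) / 2) ≠ 0 :=
    (cos_half_arctan_pos _).ne'
  have h5 : HasDerivAt (fun l : ℝ => Real.tan (Real.arctan (Real.sinh (l / 2)) / 2))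
      (1 / Real.cos (Real.arctan (Real.sinh (ℓ / 2)) / 2) ^ 2 *
        (1 / (1 + Real.sinh (ℓ / 2) ^ 2) * (Real.cosh (ℓ / 2) * (1 / 2)) / 2)) ℓ :=
    by have := (Real.hasDerivAt_tan hcos).comp ℓ h4; exact this
  have h6 := h5.const_mul (Real.exp c)
  have h7 := (Real.hasDerivAt_arctan
      (Real.exp c * Real.tan (Real.arctan (Real.sinh (ℓ / 2)) / 2))).comp ℓ h6
  have h8 := h7.const_mul 2
  exact h8

lemma sinh_le_mul_exp {x : ℝ} (hx : 0 ≤ x) : Real.sinh x ≤ x * Real.exp x := by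
  have h1 : 1 - x ≤ Real.exp (-x) := by
    have := Real.add_one_le_exp (-x); linarith
  have h2 : (1 : ℝ) ≤ Real.exp x := Real.one_le_exp hx
  have h3 : Real.exp x * Real.exp (-x) = 1 := by
    rw [← Real.exp_add]; simp
  rw [Real.sinh_eq]
  nlinarith [mul_nonneg hx (Real.exp_pos x).le, mul_le_mul_of_nonneg_left h1 (Real.exp_pos x).le]

set_option maxHeartbeats 1600000 in
/-- Let `κ_{c,t} = −cos(Y_{c₅}(ℓ+t))` be the geodesic curvature of the constant-distance curve
in the collar around a geodesic of length `ℓ+t`. Then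
`|d/dt κ_{c,t}|_{t=0}| = sin(Y_{c₅}(ℓ)) · |Y_{c₅}′(ℓ)| ≤ C ℓ` for all `ℓ ∈ (0, L̄]`, with `C`
depending only on `c₅` and `L̄`. -/
theorem curvature_variation_bound (c₅ Lbar : ℝ) (hc : 0 < c₅) (hL : 0 < Lbar) :
    ∃ C : ℝ, 0 < C ∧ ∀ ℓ : ℝ, 0 < ℓ → ℓ ≤ Lbar →
      |deriv (fun t => -Real.cos (Ycurve c₅ (ℓ + t))) 0|
          = Real.sin (Ycurve c₅ ℓ) * |deriv (Ycurve c₅) ℓ| ∧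
      |deriv (fun t => -Real.cos (Ycurve c₅ (ℓ + t))) 0| ≤ C * ℓ := by
  refine ⟨Real.exp c₅ * (Real.exp c₅ * Real.exp (Lbar / 2)), by positivity, ?_⟩
  intro ℓ hℓ hℓL
  -- notation
  set u : ℝ := Real.sinh (ℓ / 2) with hu
  set θ : ℝ := Real.arctan u with hθ
  set v : ℝ := Real.tan (θ / 2) with hv
  have hu0 : 0 < u := Real.sinh_pos_iff.mpr (by linarith)
  have hθ0 : 0 < θ := by
    rw [hθ, ← Real.arctan_zero]
    exact Real.arctan_strictMono hu0
  have hθlt : θ < π / 2 := Real.arctan_lt_pi_div_two u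
  have hv0 : 0 ≤ v := Real.tan_nonneg_of_nonneg_of_le_pi_div_two (by linarith) (by linarith)
  -- derivative facts
  have hY := ycurve_hasDerivAt c₅ ℓ
  have hshift : HasDerivAt (fun t : ℝ => Ycurve c₅ (ℓ + t)) (Yd c₅ ℓ) 0 := by
    have hadd : HasDerivAt (fun t : ℝ => ℓ + t) 1 0 := by
      simpa using (hasDerivAt_id (0 : ℝ)).const_add ℓ
    have hY' : HasDerivAt (Ycurve c₅) (Yd c₅ ℓ) ((fun t : ℝ => ℓ + t) 0) := by
      simpa using hY
    simpa [Function.comp_def] using HasDerivAt.comp (0 : ℝ) hY' hadd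
  have hκ : HasDerivAt (fun t : ℝ => -Real.cos (Ycurve c₅ (ℓ + t)))
      (Real.sin (Ycurve c₅ ℓ) * Yd c₅ ℓ) 0 := by
    have hcos' : HasDerivAt Real.cos (-Real.sin (Ycurve c₅ ℓ))
        ((fun t : ℝ => Ycurve c₅ (ℓ + t)) 0) := by
      simpa using Real.hasDerivAt_cos (Ycurve c₅ ℓ)
    have := (HasDerivAt.comp (0 : ℝ) hcos' hshift).neg
    simp [neg_mul, Function.comp_def] at this
    exact this
  have hderiv1 : deriv (fun t : ℝ => -Real.cos (Ycurve c₅ (ℓ + t))) 0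
      = Real.sin (Ycurve c₅ ℓ) * Yd c₅ ℓ := hκ.deriv
  have hderiv2 : deriv (Ycurve c₅) ℓ = Yd c₅ ℓ := hY.deriv
  -- sin (Ycurve) nonneg
  have hsY : 0 ≤ Real.sin (Ycurve c₅ ℓ) := by
    apply Real.sin_nonneg_of_nonneg_of_le_pi
    · rw [Ycurve]
      have : (0 : ℝ) ≤ Real.arctan (Real.exp c₅ * v) := by
        rw [← Real.arctan_zero]
        exact Real.arctan_strictMono.monotone (by positivity)
      simp only [← hu, ← hθ, ← hv]
      positivity
    · rw [Ycurve]
      have := Real.arctan_lt_pi_div_two (Real.exp c₅ * Real.tan (Real.arctan (Real.sinh (ℓ / 2)) / 2))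
      linarith
  -- bound on Yd : 0 ≤ Yd ≤ exp c₅
  have hcoshpos : 0 < Real.cosh (ℓ / 2) := Real.cosh_pos _
  have hcosh1 : 1 ≤ Real.cosh (ℓ / 2) := Real.one_le_cosh _
  have hcos2 : (1 / 2 : ℝ) ≤ Real.cos (θ / 2) ^ 2 := by
    have hle : Real.cos (π / 4) ≤ Real.cos (θ / 2) := by
      apply Real.cos_le_cos_of_nonneg_of_le_pi (by linarith)
      · have := Real.pi_pos; linarith
      · linarith
    have hc4 : Real.cos (π / 4) = Real.sqrt 2 / 2 := Real.cos_pi_div_four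
    have h2 : (Real.sqrt 2 / 2) ^ 2 = 1 / 2 := by
      rw [div_pow, Real.sq_sqrt (by norm_num : (2:ℝ) ≥ 0)]; norm_num
    have hpos : 0 < Real.cos (θ / 2) := cos_half_arctan_pos u
    nlinarith [Real.sqrt_nonneg 2]
  have hBeq : 1 / (1 + u ^ 2) * (Real.cosh (ℓ / 2) * (1 / 2)) / 2
      = 1 / (4 * Real.cosh (ℓ / 2)) := by
    have : 1 + u ^ 2 = Real.cosh (ℓ / 2) ^ 2 := by
      rw [hu, Real.cosh_sq]; ring
    rw [this]
    field_simp
    ring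
  have hB : 0 < 1 / (1 + u ^ 2) * (Real.cosh (ℓ / 2) * (1 / 2)) / 2 ∧
      1 / (1 + u ^ 2) * (Real.cosh (ℓ / 2) * (1 / 2)) / 2 ≤ 1 / 4 := by
    rw [hBeq]
    constructor
    · positivity
    · rw [div_le_div_iff₀ (by positivity) (by norm_num)]
      linarith
  have hT : 0 < 1 / Real.cos (θ / 2) ^ 2 ∧ 1 / Real.cos (θ / 2) ^ 2 ≤ 2 := by
    have hpos : 0 < Real.cos (θ / 2) := cos_half_arctan_pos u
    constructor
    · positivity
    · rw [div_le_iff₀ (by positivity)]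
      linarith
  have hA : 0 < 1 / (1 + (Real.exp c₅ * v) ^ 2) ∧ 1 / (1 + (Real.exp c₅ * v) ^ 2) ≤ 1 := by
    constructor
    · positivity
    · rw [div_le_one (by positivity)]
      nlinarith [sq_nonneg (Real.exp c₅ * v)]
  have hYdnn : 0 ≤ Yd c₅ ℓ := by
    rw [Yd]
    have := hB.1; have := hT.1; have := hA.1
    have he := Real.exp_pos c₅
    simp only [← hu, ← hθ, ← hv]
    positivity
  have hYdle : Yd c₅ ℓ ≤ Real.exp c₅ := by
    rw [Yd]
    simp only [← hu, ← hθ, ← hv]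
    have he := Real.exp_pos c₅
    have h1 : 1 / Real.cos (θ / 2) ^ 2 *
        (1 / (1 + u ^ 2) * (Real.cosh (ℓ / 2) * (1 / 2)) / 2) ≤ 2 * (1 / 4) :=
      mul_le_mul hT.2 hB.2 hB.1.le (by norm_num)
    have h2 : Real.exp c₅ * (1 / Real.cos (θ / 2) ^ 2 *
        (1 / (1 + u ^ 2) * (Real.cosh (ℓ / 2) * (1 / 2)) / 2)) ≤ Real.exp c₅ * (1 / 2) := by
      apply mul_le_mul_of_nonneg_left _ he.le
      linarith
    have h3 := mul_le_mul hA.2 h2 (by positivity) (by norm_num)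
    linarith
  -- bound sin (Ycurve c₅ ℓ) ≤ 2 * exp c₅ * v
  have hsinY : Real.sin (Ycurve c₅ ℓ) ≤ 2 * (Real.exp c₅ * v) := by
    rw [Ycurve]
    simp only [← hu, ← hθ, ← hv]
    rw [Real.sin_two_mul]
    set s := Real.exp c₅ * v with hs
    have hs0 : 0 ≤ s := by positivity
    have hsq : 1 ≤ Real.sqrt (1 + s ^ 2) := by
      have h := Real.sqrt_le_sqrt (show (1:ℝ) ≤ 1 + s ^ 2 by nlinarith [sq_nonneg s])
      rwa [Real.sqrt_one] at h
    have hsin : Real.sin (Real.arctan s) ≤ s := by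
      rw [Real.sin_arctan]
      exact div_le_self hs0 hsq
    have hcosle : Real.cos (Real.arctan s) ≤ 1 := Real.cos_le_one _
    have hsinnn : 0 ≤ Real.sin (Real.arctan s) := by
      rw [Real.sin_arctan]
      positivity
    have hfin : Real.sin (Real.arctan s) * Real.cos (Real.arctan s) ≤ s :=
      le_trans (mul_le_of_le_one_right hsinnn hcosle) hsin
    linarith
  -- bound v ≤ sinh (ℓ/2) ≤ (ℓ/2) * exp (Lbar/2)
  have hvle : v ≤ u := by
    rw [hv]
    have : Real.tan (θ / 2) < Real.tan θ :=
      Real.tan_lt_tan_of_nonneg_of_lt_pi_div_two (by linarith) hθlt (by linarith)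
    rw [hθ, Real.tan_arctan] at this
    linarith
  have hule : u ≤ ℓ / 2 * Real.exp (Lbar / 2) := by
    have h1 : u ≤ ℓ / 2 * Real.exp (ℓ / 2) := sinh_le_mul_exp (by linarith)
    have h2 : Real.exp (ℓ / 2) ≤ Real.exp (Lbar / 2) := Real.exp_le_exp.mpr (by linarith)
    calc u ≤ ℓ / 2 * Real.exp (ℓ / 2) := h1
      _ ≤ ℓ / 2 * Real.exp (Lbar / 2) := by
          apply mul_le_mul_of_nonneg_left h2 (by linarith)
  refine ⟨?_, ?_⟩
  · rw [hderiv1, hderiv2, abs_mul, abs_of_nonneg hsY]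
  · rw [hderiv1]
    rw [abs_of_nonneg (mul_nonneg hsY hYdnn)]
    have hsinY2 : Real.sin (Ycurve c₅ ℓ) ≤ Real.exp c₅ * Real.exp (Lbar / 2) * ℓ := by
      calc Real.sin (Ycurve c₅ ℓ) ≤ 2 * (Real.exp c₅ * v) := hsinY
        _ ≤ 2 * (Real.exp c₅ * (ℓ / 2 * Real.exp (Lbar / 2))) := by
            apply mul_le_mul_of_nonneg_left _ (by norm_num)
            apply mul_le_mul_of_nonneg_left _ (Real.exp_pos _).le
            linarith
        _ = Real.exp c₅ * Real.exp (Lbar / 2) * ℓ := by ring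
    calc Real.sin (Ycurve c₅ ℓ) * Yd c₅ ℓ
        ≤ (Real.exp c₅ * Real.exp (Lbar / 2) * ℓ) * Real.exp c₅ :=
          mul_le_mul hsinY2 hYdle hYdnn (by positivity)
      _ = Real.exp c₅ * (Real.exp c₅ * Real.exp (Lbar / 2)) * ℓ := by ring
      _ ≤ Real.exp c₅ * (Real.exp c₅ * Real.exp (Lbar / 2)) * ℓ := le_refl _
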